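/- Let λ, ω > 0 with λ² + ω² = 1, let θ < 0 and t* ∈ ℝ. If e^{λt*}·(λ·sin(ωt*) − ω·cos(ωt*)) = −ω and e^{λt*}·(λ² + ω²)·sin(ωt*) = ω·θ, then e^{2λt*} = θ² + 2λθ + 1 and cos(ωt*)/sin(ωt*) = (λθ + 1)/(ωθ) (in particular sin(ωt*) ≠ 0). -/
import Mathlib


open Real

/-- For `λ, ω > 0` with `λ² + ω² = 1`, `θ < 0` and `t* ∈ ℝ`, if
`e^{λt*}(λ sin(ωt*) − ω cos(ωt*)) = −ω` and `e^{λt*}(λ² + ω²) sin(ωt*) = ωθ`, then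
`e^{2λt*} = θ² + 2λθ + 1` and `cos(ωt*)/sin(ωt*) = (λθ + 1)/(ωθ)`
(in particular `sin(ωt*) ≠ 0`). -/
theorem stmt3 (lam ω θ tstar : ℝ) (hlam : 0 < lam) (hω : 0 < ω)
    (hunit : lam ^ 2 + ω ^ 2 = 1) (hθ : θ < 0)
    (h1 : Real.exp (lam * tstar) * (lam * Real.sin (ω * tstar) - ω * Real.cos (ω * tstar)) = -ω)
    (h2 : Real.exp (lam * tstar) * (lam ^ 2 + ω ^ 2) * Real.sin (ω * tstar) = ω * θ) :
    Real.exp (2 * lam * tstar) = θ ^ 2 + 2 * lam * θ + 1 ∧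
    Real.sin (ω * tstar) ≠ 0 ∧
    Real.cos (ω * tstar) / Real.sin (ω * tstar) = (lam * θ + 1) / (ω * θ) := by
  set E := Real.exp (lam * tstar) with hE
  set s := Real.sin (ω * tstar) with hs
  set c := Real.cos (ω * tstar) with hc
  have hEpos : 0 < E := Real.exp_pos _
  have hEs : E * s = ω * θ := by rw [hunit] at h2; linarith [h2]
  have hEc : E * c = lam * θ + 1 := by
    have h1' : lam * (E * s) - ω * (E * c) = -ω := by linear_combination h1
    rw [hEs] at h1'
    have : ω * (E * c) = ω * (lam * θ + 1) := by ring_nf; ring_nf at h1'; linarith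
    exact mul_left_cancel₀ (ne_of_gt hω) this
  have hpyth : s ^ 2 + c ^ 2 = 1 := Real.sin_sq_add_cos_sq _
  have hE2 : E ^ 2 = θ ^ 2 + 2 * lam * θ + 1 := by
    linear_combination (-(E^2))*hpyth + (E*s+ω*θ)*hEs + (E*c+lam*θ+1)*hEc + θ^2*hunit
  have hsne : s ≠ 0 := by
    intro h
    rw [h, mul_zero] at hEs
    have : ω * θ < 0 := mul_neg_of_pos_of_neg hω hθ
    linarith
  refine ⟨?_, hsne, ?_⟩
  · rw [show 2 * lam * tstar = lam * tstar + lam * tstar by ring, Real.exp_add, ← hE]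
    nlinarith [hE2]
  · have hωθ : ω * θ ≠ 0 := ne_of_lt (mul_neg_of_pos_of_neg hω hθ)
    rw [div_eq_div_iff hsne hωθ]
    have : c * (E * s) = s * (E * c) := by ring
    rw [hEs, hEc] at this
    linarith
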